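/- Let M ⊂ ℂᴺ be a formal real hypersurface of m-infinite type (m ≥ 1) given in normal coordinates by w = Q(z,χ,τ) with Q(z,χ,τ) = τ + τᵐ Q̃(z,χ,τ). Let H = (F,G) be a formal CR-transversal holomorphic map sending M into itself. Then the identity Q̃(z,χ,0) = G_w(0)^{m−1} · Q̃(F(z,0), F̄(χ,0), 0) holds as formal power series in (z,χ). -/

import Mathlib

noncomputable section
open MvPowerSeries Complex

instance {σ : Type*} : IsDomain (MvPowerSeries σ ℂ) := NoZeroDivisors.to_isDomain _

/-- total degree of a multi-index -/
def deg {σ : Type*} (d : σ →₀ ℕ) : ℕ := d.sum fun _ n => n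

/-- substitution of formal power series (intended for substituted series with
vanishing constant term, in which case each coefficient of the result is the
finite sum below) -/
def pssubst {σ τ : Type*} [Fintype σ] [DecidableEq σ] [Fintype τ] [DecidableEq τ]
    (a : σ → MvPowerSeries τ ℂ) (f : MvPowerSeries σ ℂ) : MvPowerSeries τ ℂ :=
  fun μ => ∑ d ∈ Finset.Iic (Finsupp.equivFunOnFinite.symm fun _ => deg μ),
    MvPowerSeries.coeff (R := ℂ) d f * MvPowerSeries.coeff (R := ℂ) μ (∏ i, (a i) ^ (d i))

/-- formal partial derivative ∂/∂X i -/
def pd {σ : Type*} [DecidableEq σ] (i : σ) (f : MvPowerSeries σ ℂ) : MvPowerSeries σ ℂ :=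
  fun d => ((d i : ℂ) + 1) * MvPowerSeries.coeff (R := ℂ) (d + Finsupp.single i 1) f

/-- the series with complex-conjugated coefficients -/
def psconj {σ : Type*} (f : MvPowerSeries σ ℂ) : MvPowerSeries σ ℂ :=
  MvPowerSeries.map (σ := σ) (starRingEnd ℂ) f


-- ===== infrastructure =====
set_option linter.unusedSectionVars false

lemma deg_add {σ : Type*} (p q : σ →₀ ℕ) : deg (p + q) = deg p + deg q := by
  exact Finsupp.sum_add_index' (fun _ => rfl) (fun _ _ _ => rfl)

lemma le_deg {σ : Type*} (d : σ →₀ ℕ) (i : σ) : d i ≤ deg d := by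
  by_cases h : i ∈ d.support
  · exact Finset.single_le_sum (fun _ _ => Nat.zero_le _) h
  · simp [Finsupp.notMem_support_iff.mp h]

lemma deg_mono {σ : Type*} {p q : σ →₀ ℕ} (h : p ≤ q) : deg p ≤ deg q := by
  classical
  have : q = p + (q - p) := by
    ext i
    simp only [Finsupp.coe_add, Finsupp.coe_tsub, Pi.add_apply, Pi.sub_apply]
    have := Finsupp.le_def.mp h i; omega
  conv_rhs => rw [this]
  rw [deg_add]; omega

lemma deg_eq_zero {σ : Type*} {d : σ →₀ ℕ} (h : deg d = 0) : d = 0 := by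
  ext i; have := le_deg d i; simp only [Finsupp.coe_zero, Pi.zero_apply]; omega

lemma deg_single {σ : Type*} (i : σ) (k : ℕ) : deg (Finsupp.single i k) = k := by
  simp [deg, Finsupp.sum_single_index]

-- L1 helper: coefficient of a product of many const-coeff-zero series vanishes in low degree
lemma coeff_prod_pow_zero_aux {τ : Type*} [DecidableEq τ] :
    ∀ (s : Multiset (MvPowerSeries τ ℂ)), (∀ f ∈ s, constantCoeff (σ := τ) (R := ℂ) f = 0) →
    ∀ (μ : τ →₀ ℕ), deg μ < Multiset.card s → MvPowerSeries.coeff (R := ℂ) μ s.prod = 0 := by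
  intro s
  induction s using Multiset.induction with
  | empty => intro _ μ h; simp at h
  | cons g s ih =>
    intro h μ hμ
    rw [Multiset.prod_cons, coeff_mul]
    apply Finset.sum_eq_zero
    rintro ⟨p, q⟩ hpq
    rw [Finset.HasAntidiagonal.mem_antidiagonal] at hpq
    by_cases hp : p = 0
    · have : (MvPowerSeries.coeff (R := ℂ) p) g = 0 := by
        subst hp; exact h g (Multiset.mem_cons_self g s)
      simp [this]
    · have hq : MvPowerSeries.coeff (R := ℂ) q s.prod = 0 := by
        apply ih (fun f hf => h f (Multiset.mem_cons_of_mem hf))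
        have hdp : 1 ≤ deg p := by
          rcases Finsupp.ne_iff.mp hp with ⟨i, hi⟩
          have := le_deg p i; simp at hi; omega
        have : deg p + deg q = deg μ := by rw [← deg_add, hpq]
        simp at hμ ⊢; omega
      simp [hq]

variable {σ τ υ : Type*} [Fintype σ] [DecidableEq σ] [Fintype τ] [DecidableEq τ]
  [Fintype υ] [DecidableEq υ]

/-- the monomial substitution product -/
def mon (a : σ → MvPowerSeries τ ℂ) (d : σ →₀ ℕ) : MvPowerSeries τ ℂ := ∏ i, (a i) ^ (d i)

lemma pssubst_apply (a : σ → MvPowerSeries τ ℂ) (f : MvPowerSeries σ ℂ) (μ : τ →₀ ℕ) :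
    pssubst a f μ = ∑ d ∈ Finset.Iic (Finsupp.equivFunOnFinite.symm fun _ => deg μ),
      MvPowerSeries.coeff (R := ℂ) d f * MvPowerSeries.coeff (R := ℂ) μ (mon a d) := rfl

lemma mon_add (a : σ → MvPowerSeries τ ℂ) (d e : σ →₀ ℕ) :
    mon a (d + e) = mon a d * mon a e := by
  simp [mon, pow_add, Finset.prod_mul_distrib]

lemma mon_single (a : σ → MvPowerSeries τ ℂ) (i : σ) (k : ℕ) :
    mon a (Finsupp.single i k) = a i ^ k := by
  rw [mon, Finset.prod_eq_single i]
  · simp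
  · intro j _ hj; simp [Finsupp.single_apply, Ne.symm hj]
  · simp

lemma coeff_mon_zero {a : σ → MvPowerSeries τ ℂ} (ha : ∀ i, constantCoeff (σ := τ) (R := ℂ) (a i) = 0)
    {d : σ →₀ ℕ} {μ : τ →₀ ℕ} (h : deg μ < deg d) :
    MvPowerSeries.coeff (R := ℂ) μ (mon a d) = 0 := by
  classical
  obtain ⟨n, hn⟩ : ∃ n, deg d = n := ⟨_, rfl⟩
  induction n using Nat.strong_induction_on generalizing d μ with
  | _ n ih =>
  subst hn
  have hd0 : d ≠ 0 := by rintro rfl; simp [deg] at h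
  obtain ⟨i, hi⟩ := Finsupp.ne_iff.mp hd0
  simp only [Finsupp.coe_zero, Pi.zero_apply] at hi
  have hdec : d = (d - Finsupp.single i 1) + Finsupp.single i 1 := by
    ext j
    simp only [Finsupp.coe_add, Finsupp.coe_tsub, Pi.add_apply, Pi.sub_apply]
    rcases eq_or_ne j i with rfl | hj
    · simp; omega
    · simp [Finsupp.single_apply, Ne.symm hj]
  rw [hdec, mon_add, mon_single, pow_one, coeff_mul]
  apply Finset.sum_eq_zero
  rintro ⟨p, q⟩ hpq
  rw [Finset.HasAntidiagonal.mem_antidiagonal] at hpq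
  by_cases hq : q = 0
  · have : (MvPowerSeries.coeff (R := ℂ) q) (a i) = 0 := by subst hq; exact ha i
    simp [this]
  · have hq1 : 1 ≤ deg q := by
      rcases Finsupp.ne_iff.mp hq with ⟨j, hj⟩
      have := le_deg q j; simp only [Finsupp.coe_zero, Pi.zero_apply] at hj; omega
    have hsum : deg p + deg q = deg μ := by rw [← deg_add, hpq]
    have hdd : deg (d - Finsupp.single i 1) = deg d - 1 := by
      conv_rhs => rw [hdec]
      rw [deg_add, deg_single]; omega
    have : (MvPowerSeries.coeff (R := ℂ) p) (mon a (d - Finsupp.single i 1)) = 0 := by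
      exact ih (deg d - 1) (by omega) (h := by omega) hdd
    simp [this]

lemma mem_Iic_deg (μ : τ →₀ ℕ) {d : σ →₀ ℕ} (h : deg d ≤ deg μ) :
    d ∈ Finset.Iic (Finsupp.equivFunOnFinite.symm fun _ => deg μ) := by
  rw [Finset.mem_Iic, Finsupp.le_def]
  intro i
  simpa using le_trans (le_deg d i) h

/-- L2: the defining sum can be taken over any large enough finset -/
lemma pssubst_eq_sum {a : σ → MvPowerSeries τ ℂ} (ha : ∀ i, constantCoeff (σ := τ) (R := ℂ) (a i) = 0)
    (f : MvPowerSeries σ ℂ) (μ : τ →₀ ℕ) (D : Finset (σ →₀ ℕ))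
    (hD : ∀ d, deg d ≤ deg μ → d ∈ D) :
    pssubst a f μ = ∑ d ∈ D, MvPowerSeries.coeff (R := ℂ) d f * MvPowerSeries.coeff (R := ℂ) μ (mon a d) := by
  rw [pssubst_apply]
  set E := Finset.Iic (Finsupp.equivFunOnFinite.symm (fun _ => deg μ : σ → ℕ)) with hE
  have key : ∀ (D' : Finset (σ →₀ ℕ)), (∀ d, deg d ≤ deg μ → d ∈ D') →
      ∑ d ∈ D', MvPowerSeries.coeff (R := ℂ) d f * MvPowerSeries.coeff (R := ℂ) μ (mon a d)
      = ∑ d ∈ D' ∪ E ∪ D, MvPowerSeries.coeff (R := ℂ) d f * MvPowerSeries.coeff (R := ℂ) μ (mon a d) := by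
    intro D' hD'
    apply Finset.sum_subset
    · intro x hx; exact Finset.mem_union_left _ (Finset.mem_union_left _ hx)
    · intro x _ hx
      have : ¬ deg x ≤ deg μ := fun hc => hx (hD' x hc)
      rw [coeff_mon_zero ha (by omega), mul_zero]
  rw [key E (fun d h => mem_Iic_deg μ h), key D hD]
  congr 1
  ext x
  simp only [Finset.mem_union]
  tauto

lemma pssubst_add (a : σ → MvPowerSeries τ ℂ) (f g : MvPowerSeries σ ℂ) :
    pssubst a (f + g) = pssubst a f + pssubst a g := by
  ext μ
  show pssubst a (f+g) μ = pssubst a f μ + pssubst a g μ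
  simp only [pssubst_apply, map_add, add_mul, Finset.sum_add_distrib]

lemma pssubst_C (a : σ → MvPowerSeries τ ℂ) (c : ℂ) :
    pssubst a ((MvPowerSeries.C (σ := σ) (R := ℂ)) c) = MvPowerSeries.C (σ := τ) (R := ℂ) c := by
  ext μ
  show pssubst a _ μ = _
  rw [pssubst_apply, Finset.sum_eq_single 0]
  · by_cases hμ : μ = 0 <;>
      simp [mon, MvPowerSeries.coeff_C, MvPowerSeries.coeff_one, hμ]
  · intro d _ hd
    rw [MvPowerSeries.coeff_C, if_neg hd, zero_mul]
  · intro h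
    exact absurd (mem_Iic_deg μ (by simp [deg])) h

lemma pssubst_one (a : σ → MvPowerSeries τ ℂ) : pssubst a 1 = 1 := by
  have := pssubst_C a 1
  simpa using this

lemma constantCoeff_pssubst (a : σ → MvPowerSeries τ ℂ) (f : MvPowerSeries σ ℂ) :
    constantCoeff (σ := τ) (R := ℂ) (pssubst a f) = constantCoeff (σ := σ) (R := ℂ) f := by
  show pssubst a f 0 = _
  rw [pssubst_apply, Finset.sum_eq_single 0]
  · simp [mon]
  · intro d hd hd0
    rw [Finset.mem_Iic] at hd
    exfalso
    apply hd0
    ext i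
    have := hd i
    simp only [deg, Finsupp.sum_zero_index] at this ⊢
    simp only [Finsupp.coe_equivFunOnFinite_symm] at this
    simp; omega
  · intro h
    exact absurd (mem_Iic_deg 0 (by simp [deg])) h

lemma pssubst_X {a : σ → MvPowerSeries τ ℂ} (ha : ∀ i, constantCoeff (σ := τ) (R := ℂ) (a i) = 0) (i : σ) :
    pssubst a (MvPowerSeries.X i) = a i := by
  ext μ
  show pssubst a _ μ = _
  rw [pssubst_eq_sum ha _ μ (insert (Finsupp.single i 1) (Finset.Iic (Finsupp.equivFunOnFinite.symm fun _ => deg μ)))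
    (fun d h => Finset.mem_insert_of_mem (mem_Iic_deg μ h))]
  rw [Finset.sum_insert_of_eq_zero_if_notMem]
  · rw [Finset.sum_eq_single (Finsupp.single i 1)]
    · rw [mon_single, pow_one, MvPowerSeries.X, MvPowerSeries.coeff_monomial, if_pos rfl, one_mul]
    · intro d _ hd
      rw [MvPowerSeries.X, MvPowerSeries.coeff_monomial, if_neg hd, zero_mul]
    · intro h
      rw [MvPowerSeries.X, MvPowerSeries.coeff_monomial, if_pos rfl, one_mul, mon_single, pow_one]
      -- single i 1 ∉ Iic means 1 > deg μ, i.e. deg μ = 0, so μ = 0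
      have : ¬ deg (Finsupp.single i 1) ≤ deg μ := fun hc => h (mem_Iic_deg μ hc)
      rw [deg_single] at this
      have hμ : μ = 0 := deg_eq_zero (by omega)
      subst hμ
      exact ha i
  · intro h
    rw [MvPowerSeries.X, MvPowerSeries.coeff_monomial, if_pos rfl, one_mul, mon_single, pow_one]
    have : ¬ deg (Finsupp.single i 1) ≤ deg μ := fun hc => h (mem_Iic_deg μ hc)
    rw [deg_single] at this
    have hμ : μ = 0 := deg_eq_zero (by omega)
    subst hμ
    exact ha i

lemma coeff_aeval (a : σ → MvPowerSeries τ ℂ) (P : MvPolynomial σ ℂ) (μ : τ →₀ ℕ) :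
    MvPowerSeries.coeff (R := ℂ) μ (MvPolynomial.aeval a P) =
      ∑ d ∈ P.support, MvPolynomial.coeff d P * MvPowerSeries.coeff (R := ℂ) μ (mon a d) := by
  rw [MvPolynomial.aeval_def, MvPolynomial.eval₂_eq', map_sum]
  apply Finset.sum_congr rfl
  intro d _
  have halg : ∀ c : ℂ, (algebraMap ℂ (MvPowerSeries τ ℂ)) c = MvPowerSeries.C (σ := τ) (R := ℂ) c := fun c => rfl
  rw [halg, MvPowerSeries.coeff_C_mul, mon]

/-- Lemma K: pssubst agrees with polynomial evaluation of a sufficiently good truncation -/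
lemma pssubst_eq_coeff_aeval {a : σ → MvPowerSeries τ ℂ} (ha : ∀ i, constantCoeff (σ := τ) (R := ℂ) (a i) = 0)
    (f : MvPowerSeries σ ℂ) (μ : τ →₀ ℕ) (P : MvPolynomial σ ℂ)
    (hP : ∀ d, deg d ≤ deg μ → MvPolynomial.coeff d P = MvPowerSeries.coeff (R := ℂ) d f) :
    pssubst a f μ = MvPowerSeries.coeff (R := ℂ) μ (MvPolynomial.aeval a P) := by
  classical
  rw [coeff_aeval]
  set E := Finset.Iic (Finsupp.equivFunOnFinite.symm (fun _ => deg μ : σ → ℕ)) with hE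
  set U := E ∪ P.support with hU
  rw [pssubst_eq_sum ha f μ U (fun d h => Finset.mem_union_left _ (mem_Iic_deg μ h))]
  rw [Finset.sum_subset (Finset.subset_union_right : P.support ⊆ U)
    (fun d _ hd => by rw [MvPolynomial.notMem_support_iff.mp hd, zero_mul])]
  apply Finset.sum_congr rfl
  intro d _
  by_cases h : deg d ≤ deg μ
  · rw [hP d h]
  · rw [coeff_mon_zero ha (by omega), mul_zero, mul_zero]

/-- the truncation polynomial -/
def truncP (D : Finset (σ →₀ ℕ)) (f : MvPowerSeries σ ℂ) : MvPolynomial σ ℂ :=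
  ∑ d ∈ D, MvPolynomial.monomial d (MvPowerSeries.coeff (R := ℂ) d f)

lemma coeff_truncP (D : Finset (σ →₀ ℕ)) (f : MvPowerSeries σ ℂ) (d : σ →₀ ℕ) :
    MvPolynomial.coeff d (truncP D f) = if d ∈ D then MvPowerSeries.coeff (R := ℂ) d f else 0 := by
  rw [truncP, MvPolynomial.coeff_sum]
  by_cases h : d ∈ D
  · rw [if_pos h, Finset.sum_eq_single d]
    · rw [MvPolynomial.coeff_monomial, if_pos rfl]
    · intro e _ he; rw [MvPolynomial.coeff_monomial, if_neg he]
    · intro hd; exact absurd h hd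
  · rw [if_neg h]
    apply Finset.sum_eq_zero
    intro e heD
    rw [MvPolynomial.coeff_monomial, if_neg (by rintro rfl; exact h heD)]

lemma pssubst_mul {a : σ → MvPowerSeries τ ℂ} (ha : ∀ i, constantCoeff (σ := τ) (R := ℂ) (a i) = 0)
    (f g : MvPowerSeries σ ℂ) :
    pssubst a (f * g) = pssubst a f * pssubst a g := by
  classical
  ext μ
  show pssubst a (f * g) μ = MvPowerSeries.coeff (R := ℂ) μ (pssubst a f * pssubst a g)
  set E := Finset.Iic (Finsupp.equivFunOnFinite.symm (fun _ => deg μ : σ → ℕ)) with hE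
  have hEmem : ∀ d : σ →₀ ℕ, deg d ≤ deg μ → d ∈ E := fun d h => mem_Iic_deg μ h
  set P := truncP E f with hP
  set Qq := truncP E g with hQq
  have hPf : ∀ d, deg d ≤ deg μ → MvPolynomial.coeff d P = MvPowerSeries.coeff (R := ℂ) d f := by
    intro d h; rw [hP, coeff_truncP, if_pos (hEmem d h)]
  have hQg : ∀ d, deg d ≤ deg μ → MvPolynomial.coeff d Qq = MvPowerSeries.coeff (R := ℂ) d g := by
    intro d h; rw [hQq, coeff_truncP, if_pos (hEmem d h)]
  have key : pssubst a (f * g) μ = MvPowerSeries.coeff (R := ℂ) μ (MvPolynomial.aeval a (P * Qq)) := by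
    apply pssubst_eq_coeff_aeval ha
    intro d h
    rw [MvPolynomial.coeff_mul, MvPowerSeries.coeff_mul]
    apply Finset.sum_congr rfl
    rintro ⟨p, q⟩ hpq
    rw [Finset.HasAntidiagonal.mem_antidiagonal] at hpq
    dsimp only at hpq
    have hp : deg p ≤ deg μ := le_trans (by rw [← hpq, deg_add]; omega) h
    have hq : deg q ≤ deg μ := le_trans (by rw [← hpq, deg_add]; omega) h
    rw [hPf p hp, hQg q hq]
  rw [key, map_mul, MvPowerSeries.coeff_mul, MvPowerSeries.coeff_mul]
  apply Finset.sum_congr rfl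
  rintro ⟨p, q⟩ hpq
  rw [Finset.HasAntidiagonal.mem_antidiagonal] at hpq
  dsimp only at hpq
  have hp : deg p ≤ deg μ := by rw [← hpq, deg_add]; omega
  have hq : deg q ≤ deg μ := by rw [← hpq, deg_add]; omega
  rw [← pssubst_eq_coeff_aeval ha f p P (fun d h => hPf d (le_trans h hp)),
      ← pssubst_eq_coeff_aeval ha g q Qq (fun d h => hQg d (le_trans h hq))]
  rfl

lemma pssubst_pow {a : σ → MvPowerSeries τ ℂ} (ha : ∀ i, constantCoeff (σ := τ) (R := ℂ) (a i) = 0)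
    (f : MvPowerSeries σ ℂ) (k : ℕ) : pssubst a (f ^ k) = pssubst a f ^ k := by
  induction k with
  | zero => simpa using pssubst_one a
  | succ k ih => rw [pow_succ, pow_succ, pssubst_mul ha, ih]

lemma pssubst_prod {a : σ → MvPowerSeries τ ℂ} (ha : ∀ i, constantCoeff (σ := τ) (R := ℂ) (a i) = 0)
    {ι : Type*} (s : Finset ι) (f : ι → MvPowerSeries σ ℂ) :
    pssubst a (∏ i ∈ s, f i) = ∏ i ∈ s, pssubst a (f i) := by
  classical
  induction s using Finset.induction_on with
  | empty => simpa using pssubst_one a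
  | insert _ _ hx ih =>
    rw [Finset.prod_insert hx, Finset.prod_insert hx, pssubst_mul ha, ih]

lemma pssubst_mon {a : σ → MvPowerSeries τ ℂ} (ha : ∀ i, constantCoeff (σ := τ) (R := ℂ) (a i) = 0)
    (b : υ → MvPowerSeries σ ℂ) (d : υ →₀ ℕ) :
    pssubst a (mon b d) = mon (fun i => pssubst a (b i)) d := by
  rw [mon, pssubst_prod ha, mon]
  exact Finset.prod_congr rfl fun i _ => pssubst_pow ha _ _

/-- L4: composition of substitutions -/
lemma pssubst_comp {a : σ → MvPowerSeries τ ℂ} {b : τ → MvPowerSeries υ ℂ}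
    (ha : ∀ i, constantCoeff (σ := τ) (R := ℂ) (a i) = 0) (hb : ∀ j, constantCoeff (σ := υ) (R := ℂ) (b j) = 0)
    (f : MvPowerSeries σ ℂ) :
    pssubst b (pssubst a f) = pssubst (fun i => pssubst b (a i)) f := by
  classical
  ext μ
  show pssubst b (pssubst a f) μ = pssubst (fun i => pssubst b (a i)) f μ
  set Eτ := Finset.Iic (Finsupp.equivFunOnFinite.symm (fun _ => deg μ : τ → ℕ)) with hEτ
  set Eσ := Finset.Iic (Finsupp.equivFunOnFinite.symm (fun _ => deg μ : σ → ℕ)) with hEσ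
  set F := Eτ.filter (fun e => deg e ≤ deg μ) with hF
  have step1 : pssubst b (pssubst a f) μ
      = ∑ e ∈ F, (pssubst a f) e * MvPowerSeries.coeff (R := ℂ) μ (mon b e) := by
    rw [pssubst_apply, ← hEτ, hF, Finset.sum_filter]
    apply Finset.sum_congr rfl
    intro e _
    by_cases h : deg e ≤ deg μ
    · rw [if_pos h]; rfl
    · rw [if_neg h, coeff_mon_zero hb (by omega), mul_zero]
  rw [step1]
  have step2 : ∀ e ∈ F, (pssubst a f) e
      = ∑ d ∈ Eσ, MvPowerSeries.coeff (R := ℂ) d f * MvPowerSeries.coeff (R := ℂ) e (mon a d) := by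
    intro e he
    rw [hF, Finset.mem_filter] at he
    exact pssubst_eq_sum ha f e Eσ (fun d hd => mem_Iic_deg μ (le_trans hd he.2))
  rw [Finset.sum_congr rfl (fun e he => by rw [step2 e he, Finset.sum_mul])]
  rw [Finset.sum_comm]
  rw [pssubst_eq_sum (fun i => by rw [constantCoeff_pssubst]; exact ha i) f μ Eσ
    (fun d hd => mem_Iic_deg μ hd)]
  apply Finset.sum_congr rfl
  intro d _
  rw [Finset.sum_congr rfl (fun e _ => mul_assoc _ _ _), ← Finset.mul_sum]
  congr 1
  have : ∑ e ∈ F, MvPowerSeries.coeff (R := ℂ) e (mon a d) * MvPowerSeries.coeff (R := ℂ) μ (mon b e)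
      = ∑ e ∈ Eτ, MvPowerSeries.coeff (R := ℂ) e (mon a d) * MvPowerSeries.coeff (R := ℂ) μ (mon b e) := by
    rw [hF, Finset.sum_filter]
    apply Finset.sum_congr rfl
    intro e _
    by_cases h : deg e ≤ deg μ
    · rw [if_pos h]
    · rw [coeff_mon_zero hb (by omega), mul_zero, if_neg h]
  rw [this, ← pssubst_apply b (mon a d) μ, pssubst_mon hb]
  rfl

lemma pssubst_zero_fun (f : MvPowerSeries σ ℂ) :
    pssubst (fun _ => (0 : MvPowerSeries τ ℂ)) f = MvPowerSeries.C (σ := τ) (R := ℂ) (constantCoeff (σ := σ) (R := ℂ) f) := by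
  ext μ
  show pssubst _ f μ = _
  rw [pssubst_apply, Finset.sum_eq_single 0]
  · have hm : mon (fun _ : σ => (0:MvPowerSeries τ ℂ)) 0 = 1 := by
      rw [mon]; apply Finset.prod_eq_one; intro i _; simp
    rw [hm, MvPowerSeries.coeff_one, MvPowerSeries.coeff_C,
      ← MvPowerSeries.coeff_zero_eq_constantCoeff_apply]
    by_cases hμ : μ = 0 <;> simp [hμ]
  · intro e _ he
    obtain ⟨i, hi⟩ := Finsupp.ne_iff.mp he
    simp only [Finsupp.coe_zero, Pi.zero_apply] at hi
    rw [mon, Finset.prod_eq_zero (Finset.mem_univ i) (by rw [zero_pow hi]), map_zero, mul_zero]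
  · intro h; exact absurd (mem_Iic_deg μ (by simp [deg])) h

/-- L6: substitution vanishes when f's coefficients force a zero slot -/
lemma pssubst_eq_zero_of_vanish {a : σ → MvPowerSeries τ ℂ} {f : MvPowerSeries σ ℂ}
    (p : σ → Prop) (hz : ∀ i, p i → a i = 0)
    (hf : ∀ d : σ →₀ ℕ, (∀ i, p i → d i = 0) → MvPowerSeries.coeff (R := ℂ) d f = 0) :
    pssubst a f = 0 := by
  ext μ
  show pssubst a f μ = 0
  rw [pssubst_apply]
  apply Finset.sum_eq_zero
  intro e _
  by_cases h : ∀ i, p i → e i = 0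
  · rw [hf e h, zero_mul]
  · push_neg at h
    obtain ⟨i, hpi, hei⟩ := h
    rw [mon, Finset.prod_eq_zero (Finset.mem_univ i) (by rw [hz i hpi, zero_pow hei]),
      map_zero, mul_zero]

lemma prod_X_pow_eq_monomial {ι : Type*} (s : Finset ι) (v : ι → τ) (k : ι → ℕ) :
    ∏ i ∈ s, (MvPowerSeries.X (v i) : MvPowerSeries τ ℂ) ^ (k i)
      = MvPowerSeries.monomial (R := ℂ) (∑ i ∈ s, Finsupp.single (v i) (k i)) 1 := by
  classical
  induction s using Finset.induction_on with
  | empty => simp [MvPowerSeries.monomial_zero_eq_C]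
  | insert _ _ hx ih =>
    rename_i j s'
    rw [Finset.prod_insert hx, Finset.sum_insert hx, ih, MvPowerSeries.X_pow_eq,
      MvPowerSeries.monomial_mul_monomial, one_mul]

def esum (ι : σ → τ) (e : σ →₀ ℕ) : τ →₀ ℕ :=
  ∑ i, Finsupp.single (ι i) (e i)

lemma esum_id (e : σ →₀ ℕ) : esum id e = e := by
  ext j
  rw [esum, Finsupp.finset_sum_apply]
  rw [Finset.sum_eq_single j]
  · simp
  · intro i _ hij; rw [Finsupp.single_apply, if_neg (by simpa using hij)]
  · intro h; exact absurd (Finset.mem_univ j) h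

lemma esum_apply_of_inj {ι : σ → τ} (hinj : Function.Injective ι) (e : σ →₀ ℕ) (i : σ) :
    esum ι e (ι i) = e i := by
  rw [esum, Finsupp.finset_sum_apply]
  rw [Finset.sum_eq_single i]
  · simp
  · intro j _ hij; rw [Finsupp.single_apply, if_neg (fun hc => hij (hinj hc))]
  · intro h; exact absurd (Finset.mem_univ i) h

lemma esum_apply_of_notmem {ι : σ → τ} (e : σ →₀ ℕ) (j : τ) (hj : ∀ i, ι i ≠ j) :
    esum ι e j = 0 := by
  rw [esum, Finsupp.finset_sum_apply]
  apply Finset.sum_eq_zero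
  intro i _
  rw [Finsupp.single_apply, if_neg (hj i)]

lemma mon_X_or_zero (p : σ → Prop) [DecidablePred p] (ι : σ → τ) {a : σ → MvPowerSeries τ ℂ}
    (hX : ∀ i, p i → a i = MvPowerSeries.X (ι i)) (h0 : ∀ i, ¬ p i → a i = 0) (e : σ →₀ ℕ) :
    mon a e = if ∀ i, ¬ p i → e i = 0 then MvPowerSeries.monomial (R := ℂ) (esum ι e) 1 else 0 := by
  split
  case isTrue h =>
    rw [mon, esum, ← prod_X_pow_eq_monomial]
    apply Finset.prod_congr rfl
    intro i _
    by_cases hp : p i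
    · rw [hX i hp]
    · rw [h i hp, pow_zero, pow_zero]
  case isFalse h =>
    push_neg at h
    obtain ⟨i, hpi, hei⟩ := h
    rw [mon, Finset.prod_eq_zero (Finset.mem_univ i) (by rw [h0 i hpi, zero_pow hei])]

/-- coefficient extraction when substitution is variables-or-zero -/
lemma pssubst_X_or_zero_coeff (p : σ → Prop) [DecidablePred p] {ι : σ → τ}
    (hinj : Function.Injective ι) {a : σ → MvPowerSeries τ ℂ}
    (hX : ∀ i, p i → a i = MvPowerSeries.X (ι i)) (h0 : ∀ i, ¬ p i → a i = 0)
    (f : MvPowerSeries σ ℂ) (d : σ →₀ ℕ) (hd : ∀ i, ¬ p i → d i = 0) :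
    pssubst a f (esum ι d) = MvPowerSeries.coeff (R := ℂ) d f := by
  classical
  rw [pssubst_apply]
  rw [Finset.sum_eq_single d]
  · rw [mon_X_or_zero p ι hX h0, if_pos hd, MvPowerSeries.coeff_monomial, if_pos rfl, mul_one]
  · intro e _ hed
    rw [mon_X_or_zero p ι hX h0]
    split
    · rw [MvPowerSeries.coeff_monomial, if_neg, mul_zero]
      intro hc
      apply hed
      ext i
      have h1 := esum_apply_of_inj hinj e i
      have h2 := esum_apply_of_inj hinj d i
      rw [← hc] at h1; omega
    · rw [map_zero, mul_zero]
  · intro h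
    exfalso
    apply h
    rw [Finset.mem_Iic, Finsupp.le_def]
    intro i
    have := le_deg (esum ι d) (ι i)
    rw [esum_apply_of_inj hinj] at this
    simpa using this

lemma pssubst_X_or_zero_coeff_zero (p : σ → Prop) [DecidablePred p] {ι : σ → τ}
    {a : σ → MvPowerSeries τ ℂ}
    (hX : ∀ i, p i → a i = MvPowerSeries.X (ι i)) (h0 : ∀ i, ¬ p i → a i = 0)
    (f : MvPowerSeries σ ℂ) (μ : τ →₀ ℕ)
    (hμ : ∀ e : σ →₀ ℕ, (∀ i, ¬ p i → e i = 0) → esum ι e ≠ μ) :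
    pssubst a f μ = 0 := by
  classical
  rw [pssubst_apply]
  apply Finset.sum_eq_zero
  intro e _
  rw [mon_X_or_zero p ι hX h0]
  split
  case isTrue h =>
    rw [MvPowerSeries.coeff_monomial, if_neg (fun hc => (hμ e h) hc.symm), mul_zero]
  case isFalse h => rw [map_zero, mul_zero]

/-- every nonzero coefficient's exponent is supported on `p` -/
def SuppOn (p : τ → Prop) (f : MvPowerSeries τ ℂ) : Prop :=
  ∀ d : τ →₀ ℕ, MvPowerSeries.coeff (R := ℂ) d f ≠ 0 → ∀ i, d i ≠ 0 → p i

/-- every nonzero coefficient's exponent touches `p` -/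
def Vanish (p : τ → Prop) (f : MvPowerSeries τ ℂ) : Prop :=
  ∀ d : τ →₀ ℕ, (∀ i, p i → d i = 0) → MvPowerSeries.coeff (R := ℂ) d f = 0

lemma suppOn_X (p : τ → Prop) (i : τ) (hpi : p i) : SuppOn p (MvPowerSeries.X i) := by
  intro d hd j hj
  rw [MvPowerSeries.X, MvPowerSeries.coeff_monomial] at hd
  split at hd
  · rename_i h; subst h
    rw [Finsupp.single_apply] at hj
    rcases eq_or_ne i j with rfl | hij
    · exact hpi
    · rw [if_neg hij] at hj; exact absurd rfl hj
  · exact absurd rfl hd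

lemma suppOn_zero (p : τ → Prop) : SuppOn p (0 : MvPowerSeries τ ℂ) := by
  intro d hd; simp at hd

lemma suppOn_C (p : τ → Prop) (c : ℂ) : SuppOn p (MvPowerSeries.C (σ := τ) (R := ℂ) c) := by
  intro d hd j hj
  rw [MvPowerSeries.coeff_C] at hd
  split at hd
  · rename_i h; subst h; simp at hj
  · exact absurd rfl hd

lemma suppOn_one (p : τ → Prop) : SuppOn p (1 : MvPowerSeries τ ℂ) := by
  simpa using suppOn_C p 1

lemma suppOn_add {p : τ → Prop} {f g : MvPowerSeries τ ℂ} (hf : SuppOn p f) (hg : SuppOn p g) :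
    SuppOn p (f + g) := by
  intro d hd j hj
  rw [map_add] at hd
  by_cases h : MvPowerSeries.coeff (R := ℂ) d f ≠ 0
  · exact hf d h j hj
  · push_neg at h
    exact hg d (by intro hc; rw [h, hc, add_zero] at hd; exact hd rfl) j hj

lemma suppOn_mul {p : τ → Prop} {f g : MvPowerSeries τ ℂ} (hf : SuppOn p f) (hg : SuppOn p g) :
    SuppOn p (f * g) := by
  intro d hd j hj
  rw [MvPowerSeries.coeff_mul] at hd
  obtain ⟨⟨u, v⟩, huv, hne⟩ := Finset.exists_ne_zero_of_sum_ne_zero hd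
  rw [Finset.HasAntidiagonal.mem_antidiagonal] at huv
  dsimp only at huv hne
  have hu := left_ne_zero_of_mul hne
  have hv := right_ne_zero_of_mul hne
  have : u j ≠ 0 ∨ v j ≠ 0 := by
    by_contra hc; push_neg at hc
    apply hj
    rw [← huv]; simp [hc.1, hc.2]
  rcases this with h | h
  · exact hf u hu j h
  · exact hg v hv j h

lemma suppOn_pow {p : τ → Prop} {f : MvPowerSeries τ ℂ} (hf : SuppOn p f) (k : ℕ) :
    SuppOn p (f ^ k) := by
  induction k with
  | zero => simpa using suppOn_one p
  | succ k ih => rw [pow_succ]; exact suppOn_mul ih hf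

lemma suppOn_mon {p : τ → Prop} {a : σ → MvPowerSeries τ ℂ} (ha : ∀ i, SuppOn p (a i))
    (e : σ →₀ ℕ) : SuppOn p (mon a e) := by
  rw [mon]
  classical
  induction (Finset.univ : Finset σ) using Finset.induction_on with
  | empty => simpa using suppOn_one p
  | insert _ _ hx ih => rename_i i s
                        rw [Finset.prod_insert hx]
                        exact suppOn_mul (suppOn_pow (ha i) _) ih

lemma suppOn_pssubst {p : τ → Prop} {a : σ → MvPowerSeries τ ℂ} (ha : ∀ i, SuppOn p (a i))
    (f : MvPowerSeries σ ℂ) : SuppOn p (pssubst a f) := by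
  intro d hd j hj
  rw [MvPowerSeries.coeff_apply, pssubst_apply] at hd
  obtain ⟨e, _, hne⟩ := Finset.exists_ne_zero_of_sum_ne_zero hd
  exact suppOn_mon ha e d (right_ne_zero_of_mul hne) j hj

lemma vanish_of_suppOn_constzero {p q : τ → Prop} {f : MvPowerSeries τ ℂ}
    (hs : SuppOn q f) (hc : constantCoeff (σ := τ) (R := ℂ) f = 0)
    (hpq : ∀ i, q i → p i) : Vanish p f := by
  intro d hd
  by_contra hne
  have hd0 : d = 0 := by
    ext i
    simp only [Finsupp.coe_zero, Pi.zero_apply]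
    by_contra hdi
    exact absurd (hd i (hpq i (hs d hne i hdi))) hdi
  subst hd0
  exact hne hc

lemma vanish_mul_left {p : τ → Prop} {f : MvPowerSeries τ ℂ} (hf : Vanish p f)
    (g : MvPowerSeries τ ℂ) : Vanish p (f * g) := by
  intro d hd
  rw [MvPowerSeries.coeff_mul]
  apply Finset.sum_eq_zero
  rintro ⟨u, v⟩ huv
  rw [Finset.HasAntidiagonal.mem_antidiagonal] at huv
  dsimp only at huv ⊢
  have : ∀ i, p i → u i = 0 := by
    intro i hpi
    have := hd i hpi
    have : u i + v i = 0 := by rw [← this, ← huv]; simp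
    omega
  rw [hf u this, zero_mul]

lemma vanish_mul_right {p : τ → Prop} {g : MvPowerSeries τ ℂ} (hg : Vanish p g)
    (f : MvPowerSeries τ ℂ) : Vanish p (f * g) := by
  rw [mul_comm]; exact vanish_mul_left hg f

lemma vanish_pow {p : τ → Prop} {f : MvPowerSeries τ ℂ} (hf : Vanish p f) {k : ℕ} (hk : 1 ≤ k) :
    Vanish p (f ^ k) := by
  obtain ⟨k', rfl⟩ := Nat.exists_eq_add_of_le hk
  rw [pow_add, pow_one]
  exact vanish_mul_left hf _

lemma vanish_sub {p : τ → Prop} {f g : MvPowerSeries τ ℂ} (hf : Vanish p f) (hg : Vanish p g) :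
    Vanish p (f - g) := by
  intro d hd
  rw [map_sub, hf d hd, hg d hd, sub_zero]

lemma vanish_pssubst {p : τ → Prop} {q : σ → Prop} {a : σ → MvPowerSeries τ ℂ}
    {f : MvPowerSeries σ ℂ} (ha : ∀ i, q i → Vanish p (a i)) (hf : Vanish q f) :
    Vanish p (pssubst a f) := by
  classical
  intro d hd
  rw [MvPowerSeries.coeff_apply, pssubst_apply]
  apply Finset.sum_eq_zero
  intro e _
  by_cases h : ∀ i, q i → e i = 0
  · rw [hf e h, zero_mul]
  · push_neg at h
    obtain ⟨i, hqi, hei⟩ := h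
    have hmon : mon a e = a i ^ e i * ∏ j ∈ Finset.univ.erase i, a j ^ e j := by
      rw [mon, ← Finset.mul_prod_erase _ _ (Finset.mem_univ i)]
    rw [hmon, vanish_mul_left (vanish_pow (ha i hqi) (by omega)) _ d hd, mul_zero]

/-- coefficients touching `p`-variables have `t0`-degree at least `m` -/
def TauBound (p : τ → Prop) (t0 : τ) (m : ℕ) (f : MvPowerSeries τ ℂ) : Prop :=
  ∀ d : τ →₀ ℕ, MvPowerSeries.coeff (R := ℂ) d f ≠ 0 → (∃ i, p i ∧ d i ≠ 0) → m ≤ d t0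

lemma tauBound_of_suppOn {p q : τ → Prop} {t0 : τ} {m : ℕ} {f : MvPowerSeries τ ℂ}
    (hs : SuppOn q f) (h : ∀ i, p i → ¬ q i) : TauBound p t0 m f := by
  rintro d hd ⟨i, hpi, hdi⟩
  exact absurd (hs d hd i hdi) (h i hpi)

lemma tauBound_mul {p : τ → Prop} {t0 : τ} {m : ℕ} {f g : MvPowerSeries τ ℂ}
    (hf : TauBound p t0 m f) (hg : TauBound p t0 m g) : TauBound p t0 m (f * g) := by
  rintro d hd ⟨i, hpi, hdi⟩
  rw [MvPowerSeries.coeff_mul] at hd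
  obtain ⟨⟨u, v⟩, huv, hne⟩ := Finset.exists_ne_zero_of_sum_ne_zero hd
  rw [Finset.HasAntidiagonal.mem_antidiagonal] at huv
  dsimp only at huv hne
  have hti : u i + v i = d i := by rw [← huv]; simp
  have ht0 : u t0 + v t0 = d t0 := by rw [← huv]; simp
  have : u i ≠ 0 ∨ v i ≠ 0 := by by_contra hc; push_neg at hc; omega
  rcases this with h | h
  · have := hf u (left_ne_zero_of_mul hne) ⟨i, hpi, h⟩; omega
  · have := hg v (right_ne_zero_of_mul hne) ⟨i, hpi, h⟩; omega

lemma tauBound_add {p : τ → Prop} {t0 : τ} {m : ℕ} {f g : MvPowerSeries τ ℂ}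
    (hf : TauBound p t0 m f) (hg : TauBound p t0 m g) : TauBound p t0 m (f + g) := by
  rintro d hd hex
  rw [map_add] at hd
  by_cases h : MvPowerSeries.coeff (R := ℂ) d f ≠ 0
  · exact hf d h hex
  · push_neg at h
    exact hg d (by intro hc; rw [h, hc, add_zero] at hd; exact hd rfl) hex

lemma tauBound_one (p : τ → Prop) (t0 : τ) (m : ℕ) : TauBound p t0 m (1 : MvPowerSeries τ ℂ) := by
  apply tauBound_of_suppOn (q := fun _ => False) _ (fun i _ => id)
  intro d hd j hj
  rw [MvPowerSeries.coeff_one] at hd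
  split at hd
  · rename_i h; subst h; simp at hj
  · exact absurd rfl hd

lemma tauBound_pow {p : τ → Prop} {t0 : τ} {m : ℕ} {f : MvPowerSeries τ ℂ}
    (hf : TauBound p t0 m f) (k : ℕ) : TauBound p t0 m (f ^ k) := by
  induction k with
  | zero => simpa using tauBound_one p t0 m
  | succ k ih => rw [pow_succ]; exact tauBound_mul ih hf

lemma tauBound_mon {p : τ → Prop} {t0 : τ} {m : ℕ} {a : σ → MvPowerSeries τ ℂ}
    (ha : ∀ i, TauBound p t0 m (a i)) (e : σ →₀ ℕ) : TauBound p t0 m (mon a e) := by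
  rw [mon]
  classical
  induction (Finset.univ : Finset σ) using Finset.induction_on with
  | empty => simpa using tauBound_one p t0 m
  | insert _ _ hx ih => rename_i i s
                        rw [Finset.prod_insert hx]
                        exact tauBound_mul (tauBound_pow (ha i) _) ih

lemma tauBound_pssubst {p : τ → Prop} {t0 : τ} {m : ℕ} {a : σ → MvPowerSeries τ ℂ}
    (ha : ∀ i, TauBound p t0 m (a i)) (f : MvPowerSeries σ ℂ) :
    TauBound p t0 m (pssubst a f) := by
  intro d hd hex
  rw [MvPowerSeries.coeff_apply, pssubst_apply] at hd
  obtain ⟨e, _, hne⟩ := Finset.exists_ne_zero_of_sum_ne_zero hd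
  exact tauBound_mon ha e d (right_ne_zero_of_mul hne) hex

lemma coeff_psconj {σ' : Type*} (f : MvPowerSeries σ' ℂ) (d : σ' →₀ ℕ) :
    MvPowerSeries.coeff (R := ℂ) d (psconj f) = (starRingEnd ℂ) (MvPowerSeries.coeff (R := ℂ) d f) :=
  MvPowerSeries.coeff_map _ _ _

lemma constantCoeff_psconj {σ' : Type*} (f : MvPowerSeries σ' ℂ) :
    constantCoeff (σ := σ') (R := ℂ) (psconj f) = (starRingEnd ℂ) (constantCoeff (σ := σ') (R := ℂ) f) := by
  rw [← MvPowerSeries.coeff_zero_eq_constantCoeff_apply, coeff_psconj,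
    MvPowerSeries.coeff_zero_eq_constantCoeff_apply]

lemma psconj_mul {σ' : Type*} (f g : MvPowerSeries σ' ℂ) :
    psconj (f * g) = psconj f * psconj g := map_mul _ _ _

lemma psconj_X {σ' : Type*} (i : σ') : psconj (MvPowerSeries.X i) = MvPowerSeries.X i := by
  classical
  ext d
  rw [coeff_psconj, MvPowerSeries.X, MvPowerSeries.coeff_monomial]
  split <;> simp

/-- X is nonzero -/
lemma X_ne_zero' (i : τ) : (MvPowerSeries.X i : MvPowerSeries τ ℂ) ≠ 0 := by
  intro hc
  have := congrArg (MvPowerSeries.coeff (R := ℂ) (Finsupp.single i 1)) hc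
  rw [MvPowerSeries.X, MvPowerSeries.coeff_monomial, if_pos rfl, map_zero] at this
  exact one_ne_zero this

/-- the quotient by a variable power -/
def divXpow (v : τ) (k : ℕ) (f : MvPowerSeries τ ℂ) : MvPowerSeries τ ℂ :=
  fun d => f (d + Finsupp.single v k)

lemma X_pow_mul_divXpow {v : τ} {k : ℕ} {f : MvPowerSeries τ ℂ}
    (h : ∀ d : τ →₀ ℕ, d v < k → MvPowerSeries.coeff (R := ℂ) d f = 0) :
    (MvPowerSeries.X v : MvPowerSeries τ ℂ) ^ k * divXpow v k f = f := by
  ext d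
  rw [MvPowerSeries.X_pow_eq, MvPowerSeries.coeff_monomial_mul]
  split
  case isTrue hle =>
    rw [one_mul]
    show f _ = f d
    congr 1
    have hv : k ≤ d v := by
      have := Finsupp.le_def.mp hle v
      rwa [Finsupp.single_eq_same] at this
    ext j
    simp only [Finsupp.coe_add, Finsupp.coe_tsub, Pi.add_apply, Pi.sub_apply]
    rcases eq_or_ne j v with rfl | hj
    · rw [Finsupp.single_eq_same]; omega
    · rw [Finsupp.single_eq_of_ne' (Ne.symm hj)]; omega
  case isFalse hle =>
    rw [eq_comm]
    apply h
    by_contra hc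
    apply hle
    rw [Finsupp.le_def]
    intro j
    rcases eq_or_ne j v with rfl | hj
    · rw [Finsupp.single_eq_same]; omega
    · rw [Finsupp.single_eq_of_ne' (Ne.symm hj)]; omega

lemma pssubst_zero (a : σ → MvPowerSeries τ ℂ) : pssubst a (0 : MvPowerSeries σ ℂ) = 0 := by
  ext μ
  show pssubst a 0 μ = _
  rw [pssubst_apply]
  apply Finset.sum_eq_zero
  intro e _
  rw [map_zero, zero_mul]

lemma pssubst_sub (a : σ → MvPowerSeries τ ℂ) (f g : MvPowerSeries σ ℂ) :
    pssubst a (f - g) = pssubst a f - pssubst a g := by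
  have := pssubst_add a (f - g) g
  rw [sub_add_cancel] at this
  rw [this]; ring

lemma pssubst_eq_self {p : τ → Prop} [DecidablePred p] {a : τ → MvPowerSeries τ ℂ}
    (hX : ∀ i, p i → a i = MvPowerSeries.X i) (h0 : ∀ i, ¬ p i → a i = 0)
    {f : MvPowerSeries τ ℂ} (hf : SuppOn p f) : pssubst a f = f := by
  classical
  ext μ
  rw [MvPowerSeries.coeff_apply]
  by_cases h : ∀ i, ¬ p i → μ i = 0
  · have := pssubst_X_or_zero_coeff p (Function.injective_id) (ι := id)
      (fun i hi => by rw [hX i hi]; rfl) h0 f μ h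
    rw [esum_id] at this
    rw [MvPowerSeries.coeff_apply] at this
    exact this
  · rw [pssubst_X_or_zero_coeff_zero p (ι := id) (fun i hi => by rw [hX i hi]; rfl) h0 f μ
      (by intro e he hc; rw [esum_id] at hc; subst hc; exact h he)]
    push_neg at h
    obtain ⟨i, hpi, hμi⟩ := h
    by_contra hc
    exact hpi (hf μ (fun hz => hc hz.symm) i hμi)

lemma pssubst_eq_C_of_suppOn {p : τ → Prop} {a : τ → MvPowerSeries υ ℂ}
    (hz : ∀ i, p i → a i = 0) {f : MvPowerSeries τ ℂ} (hf : SuppOn p f) :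
    pssubst a f = MvPowerSeries.C (σ := υ) (R := ℂ) (constantCoeff (σ := τ) (R := ℂ) f) := by
  ext μ
  show pssubst a f μ = _
  rw [pssubst_apply, Finset.sum_eq_single 0]
  · have hm : mon a 0 = 1 := by
      rw [mon]; apply Finset.prod_eq_one; intro i _; simp
    rw [hm, MvPowerSeries.coeff_one, MvPowerSeries.coeff_C,
      ← MvPowerSeries.coeff_zero_eq_constantCoeff_apply]
    by_cases hμ : μ = 0 <;> simp [hμ]
  · intro e _ he
    by_cases hce : MvPowerSeries.coeff (R := ℂ) e f = 0
    · rw [hce, zero_mul]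
    · obtain ⟨i, hi⟩ := Finsupp.ne_iff.mp he
      simp only [Finsupp.coe_zero, Pi.zero_apply] at hi
      have hpi : p i := hf e hce i hi
      rw [mon, Finset.prod_eq_zero (Finset.mem_univ i) (by rw [hz i hpi, zero_pow hi]),
        map_zero, mul_zero]
  · intro h; exact absurd (mem_Iic_deg μ (by simp [deg])) h

lemma coeff_X_pow_mul_ne_zero {v : τ} {k : ℕ} {h : MvPowerSeries τ ℂ} {d : τ →₀ ℕ}
    (hne : MvPowerSeries.coeff (R := ℂ) d ((MvPowerSeries.X v : MvPowerSeries τ ℂ) ^ k * h) ≠ 0) :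
    k ≤ d v := by
  rw [MvPowerSeries.X_pow_eq, MvPowerSeries.coeff_monomial_mul] at hne
  split at hne
  · rename_i hle
    have := Finsupp.le_def.mp hle v
    rwa [Finsupp.single_eq_same] at this
  · exact absurd rfl hne

-- ===== end infrastructure =====

/-- variables (z, w) of source/target space -/
abbrev Wv (n : ℕ) : Type := Fin n ⊕ Unit
/-- variables (z, χ, τ) for complexified defining equations -/
abbrev Vv (n : ℕ) : Type := Fin n ⊕ (Fin n ⊕ Unit)
/-- the variable τ -/
def tv (n : ℕ) : Vv n := Sum.inr (Sum.inr ())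

/-- substitution (z, w) ↦ (z, Q(z,χ,τ)) -/
def sLHS {n : ℕ} (Q : MvPowerSeries (Vv n) ℂ) : Wv n → MvPowerSeries (Vv n) ℂ
  | Sum.inl i => MvPowerSeries.X (Sum.inl i)
  | Sum.inr _ => Q

/-- substitution (z, w) ↦ (χ, τ) -/
def sBar {n : ℕ} : Wv n → MvPowerSeries (Vv n) ℂ
  | Sum.inl i => MvPowerSeries.X (Sum.inr (Sum.inl i))
  | Sum.inr _ => MvPowerSeries.X (Sum.inr (Sum.inr ()))

/-- the formal map H = (F, G) sends M = {w = Q(z,χ,τ)} into M' = {w' = Q'(z',χ',τ')}: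
G(z,Q(z,χ,τ)) = Q'(F(z,Q(z,χ,τ)), F̄(χ,τ), Ḡ(χ,τ)) -/
def SendsInto {n : ℕ} (Q Q' : MvPowerSeries (Vv n) ℂ)
    (F : Fin n → MvPowerSeries (Wv n) ℂ) (G : MvPowerSeries (Wv n) ℂ) : Prop :=
  pssubst (sLHS Q) G =
    pssubst (fun v => match v with
      | Sum.inl i => pssubst (sLHS Q) (F i)
      | Sum.inr (Sum.inl i) => pssubst sBar (psconj (F i))
      | Sum.inr (Sum.inr _) => pssubst sBar (psconj G)) Q'

/-- substitution (z,χ,τ) ↦ (z,χ,0) -/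
def sTau0 {n : ℕ} : Vv n → MvPowerSeries (Vv n) ℂ
  | Sum.inl i => MvPowerSeries.X (Sum.inl i)
  | Sum.inr (Sum.inl i) => MvPowerSeries.X (Sum.inr (Sum.inl i))
  | Sum.inr (Sum.inr _) => 0

/-- substitution (z,w) ↦ (z,0) -/
def sZ0 {n : ℕ} : Wv n → MvPowerSeries (Vv n) ℂ
  | Sum.inl i => MvPowerSeries.X (Sum.inl i)
  | Sum.inr _ => 0

/-- substitution (z,w) ↦ (χ,0) -/
def sChi0 {n : ℕ} : Wv n → MvPowerSeries (Vv n) ℂ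
  | Sum.inl i => MvPowerSeries.X (Sum.inr (Sum.inl i))
  | Sum.inr _ => 0


-- ===== predicates on the variable types =====

/-- z-variables of Vv n -/
def pzV {n : ℕ} : Vv n → Prop := fun v => match v with | Sum.inl _ => True | _ => False
/-- χ-variables of Vv n -/
def pcV {n : ℕ} : Vv n → Prop := fun v => match v with | Sum.inr (Sum.inl _) => True | _ => False
/-- χ- and τ-variables of Vv n -/
def pctV {n : ℕ} : Vv n → Prop := fun v => match v with | Sum.inl _ => False | _ => True
/-- z-variables of Wv n -/
def pzW {n : ℕ} : Wv n → Prop := fun v => match v with | Sum.inl _ => True | _ => False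

instance {n : ℕ} : DecidablePred (pzV (n := n)) := by
  intro v; rcases v with i | (i | u)
  · exact Decidable.isTrue trivial
  · exact Decidable.isFalse id
  · exact Decidable.isFalse id

instance {n : ℕ} : DecidablePred (pcV (n := n)) := by
  intro v; rcases v with i | (i | u)
  · exact Decidable.isFalse id
  · exact Decidable.isTrue trivial
  · exact Decidable.isFalse id

instance {n : ℕ} : DecidablePred (pctV (n := n)) := by
  intro v; rcases v with i | (i | u)
  · exact Decidable.isFalse id
  · exact Decidable.isTrue trivial
  · exact Decidable.isTrue trivial

instance {n : ℕ} : DecidablePred (pzW (n := n)) := by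
  intro v; rcases v with i | u
  · exact Decidable.isTrue trivial
  · exact Decidable.isFalse id

/-- embedding of source variables: z ↦ z, w ↦ τ -/
def iW {n : ℕ} : Wv n → Vv n := fun v => match v with
  | Sum.inl i => Sum.inl i
  | Sum.inr _ => tv n

lemma iW_inj {n : ℕ} : Function.Injective (iW (n := n)) := by
  rintro (i | u) (j | u') h
  · simpa [iW] using h
  · simp [iW, tv] at h
  · simp [iW, tv] at h
  · rcases u with ⟨⟩; rcases u' with ⟨⟩; rfl

/-- substitution setting z = 0 and τ = 0 (keeping χ) -/
def sY {n : ℕ} : Vv n → MvPowerSeries (Vv n) ℂ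
  | Sum.inr (Sum.inl i) => MvPowerSeries.X (Sum.inr (Sum.inl i))
  | _ => 0

/-- substitution setting χ = 0 and τ = 0 (keeping z) -/
def sZch {n : ℕ} : Vv n → MvPowerSeries (Vv n) ℂ
  | Sum.inl i => MvPowerSeries.X (Sum.inl i)
  | _ => 0

section mainproof

variable {n : ℕ}

lemma haTau0 : ∀ v, constantCoeff (σ := Vv n) (R := ℂ) (sTau0 v) = 0 := by
  rintro (i | (i | u)) <;> simp [sTau0, MvPowerSeries.constantCoeff_X]

lemma haY : ∀ v, constantCoeff (σ := Vv n) (R := ℂ) (sY v) = 0 := by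
  rintro (i | (i | u)) <;> simp [sY, MvPowerSeries.constantCoeff_X]

lemma haZch : ∀ v, constantCoeff (σ := Vv n) (R := ℂ) (sZch v) = 0 := by
  rintro (i | (i | u)) <;> simp [sZch, MvPowerSeries.constantCoeff_X]

lemma haZ0 : ∀ v, constantCoeff (σ := Vv n) (R := ℂ) (sZ0 (n := n) v) = 0 := by
  rintro (i | u) <;> simp [sZ0, MvPowerSeries.constantCoeff_X]

lemma haChi0 : ∀ v, constantCoeff (σ := Vv n) (R := ℂ) (sChi0 (n := n) v) = 0 := by
  rintro (i | u) <;> simp [sChi0, MvPowerSeries.constantCoeff_X]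

lemma haBar : ∀ v, constantCoeff (σ := Vv n) (R := ℂ) (sBar (n := n) v) = 0 := by
  rintro (i | u) <;> simp [sBar, MvPowerSeries.constantCoeff_X]

/-- coefficient formula for the τ = 0 substitution -/
lemma coeff_sTau0 (f : MvPowerSeries (Vv n) ℂ) (d : Vv n →₀ ℕ) (hd : d (tv n) = 0) :
    pssubst sTau0 f d = MvPowerSeries.coeff (R := ℂ) d f := by
  have hX : ∀ v : Vv n, v ≠ tv n → sTau0 v = MvPowerSeries.X (id v) := by
    rintro (i | (i | u)) h
    · rfl
    · rfl
    · exact absurd rfl h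
  have h0 : ∀ v : Vv n, ¬ v ≠ tv n → sTau0 (n := n) v = 0 := by
    intro v hv
    rw [not_ne_iff.mp hv]; rfl
  have := pssubst_X_or_zero_coeff (fun v => v ≠ tv n) Function.injective_id hX h0 f d
    (fun v hv => by rw [not_ne_iff.mp hv]; exact hd)
  rwa [esum_id] at this

lemma coeff_sTau0_ne (f : MvPowerSeries (Vv n) ℂ) (d : Vv n →₀ ℕ) (hd : d (tv n) ≠ 0) :
    pssubst sTau0 f d = 0 := by
  have hX : ∀ v : Vv n, v ≠ tv n → sTau0 v = MvPowerSeries.X (id v) := by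
    rintro (i | (i | u)) h
    · rfl
    · rfl
    · exact absurd rfl h
  have h0 : ∀ v : Vv n, ¬ v ≠ tv n → sTau0 (n := n) v = 0 := by
    intro v hv; rw [not_ne_iff.mp hv]; rfl
  apply pssubst_X_or_zero_coeff_zero (fun v => v ≠ tv n) hX h0 f d
  intro e he hc
  rw [esum_id] at hc
  subst hc
  exact hd (he (tv n) (fun h => h rfl))

end mainproof

/-- Lemma (basidinft): for a CR-transversal self-map H = (F,G) of an m-infinite type
hypersurface, Q̃(z,χ,0) = G_w(0)^{m-1} · Q̃(F(z,0), F̄(χ,0), 0). -/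
theorem stmt_7 (n m : ℕ) (hm : 1 ≤ m)
    (Qt : MvPowerSeries (Vv n) ℂ)
(hQtz0 : ∀ d : Vv n →₀ ℕ, (∀ i, d (Sum.inr (Sum.inl i)) = 0) → MvPowerSeries.coeff (R := ℂ) d Qt = 0)
    (hQtχ0 : ∀ d : Vv n →₀ ℕ, (∀ i, d (Sum.inl i) = 0) → MvPowerSeries.coeff (R := ℂ) d Qt = 0)
    (hQtnt : ∃ d : Vv n →₀ ℕ, d (tv n) = 0 ∧ MvPowerSeries.coeff (R := ℂ) d Qt ≠ 0)
(F : Fin n → MvPowerSeries (Wv n) ℂ) (G : MvPowerSeries (Wv n) ℂ)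
    (hF0 : ∀ i, MvPowerSeries.constantCoeff (R := ℂ) (F i) = 0)
    (hG0 : MvPowerSeries.constantCoeff (R := ℂ) G = 0)
    (hmap : SendsInto (MvPowerSeries.X (tv n) + (MvPowerSeries.X (tv n)) ^ m * Qt)
      (MvPowerSeries.X (tv n) + (MvPowerSeries.X (tv n)) ^ m * Qt) F G)
    (hcr : MvPowerSeries.coeff (R := ℂ) (Finsupp.single (Sum.inr ()) 1) G ≠ 0) :
    pssubst sTau0 Qt =
      (MvPowerSeries.C (σ := Vv n) (R := ℂ) (MvPowerSeries.coeff (R := ℂ) (Finsupp.single (Sum.inr ()) 1) G)) ^ (m - 1) *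
        pssubst (fun v => match v with
          | Sum.inl i => pssubst sZ0 (F i)
          | Sum.inr (Sum.inl i) => pssubst sChi0 (psconj (F i))
          | Sum.inr (Sum.inr _) => 0) Qt := by
  classical
  have hm0 : m ≠ 0 := by omega
  set g : ℂ := MvPowerSeries.coeff (R := ℂ) (Finsupp.single (Sum.inr ()) 1) G with hgdef
  set Q : MvPowerSeries (Vv n) ℂ :=
    MvPowerSeries.X (tv n) + (MvPowerSeries.X (tv n)) ^ m * Qt with hQdef
  set σf : Vv n → MvPowerSeries (Vv n) ℂ := fun v => match v with
      | Sum.inl i => pssubst (sLHS Q) (F i)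
      | Sum.inr (Sum.inl i) => pssubst sBar (psconj (F i))
      | Sum.inr (Sum.inr _) => pssubst sBar (psconj G) with hσf
  set σ0 : Vv n → MvPowerSeries (Vv n) ℂ := fun v => match v with
      | Sum.inl i => pssubst sZ0 (F i)
      | Sum.inr (Sum.inl i) => pssubst sChi0 (psconj (F i))
      | Sum.inr (Sum.inr _) => 0 with hσ0
  unfold SendsInto at hmap
  have hm2 : pssubst (sLHS Q) G = pssubst σf Q := hmap
  -- constant coefficients
  have hQ0 : constantCoeff (σ := Vv n) (R := ℂ) Q = 0 := by
    rw [hQdef]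
    simp [MvPowerSeries.constantCoeff_X, zero_pow hm0]
  have haLHS : ∀ w, constantCoeff (σ := Vv n) (R := ℂ) (sLHS Q w) = 0 := by
    rintro (i | u)
    · simp [sLHS, MvPowerSeries.constantCoeff_X]
    · exact hQ0
  have haσf : ∀ v, constantCoeff (σ := Vv n) (R := ℂ) (σf v) = 0 := by
    rintro (i | (i | u))
    · rw [hσf]; show constantCoeff (R := ℂ) (pssubst (sLHS Q) (F i)) = 0
      rw [constantCoeff_pssubst]; exact hF0 i
    · rw [hσf]; show constantCoeff (R := ℂ) (pssubst sBar (psconj (F i))) = 0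
      rw [constantCoeff_pssubst, constantCoeff_psconj, hF0 i, map_zero]
    · rw [hσf]; show constantCoeff (R := ℂ) (pssubst sBar (psconj G)) = 0
      rw [constantCoeff_pssubst, constantCoeff_psconj, hG0, map_zero]
  -- expansion of the basic mapping identity
  have hexp : pssubst (sLHS Q) G = pssubst sBar (psconj G)
      + (pssubst sBar (psconj G)) ^ m * pssubst σf Qt := by
    rw [hm2, hQdef, pssubst_add, pssubst_mul haσf, pssubst_pow haσf, pssubst_X haσf]
    rfl
  -- τ = 0 substitution basics
  have hEQ : pssubst sTau0 Q = 0 := by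
    rw [hQdef, pssubst_add, pssubst_mul haTau0, pssubst_pow haTau0, pssubst_X haTau0]
    show (0 : MvPowerSeries (Vv n) ℂ) + 0 ^ m * _ = 0
    rw [zero_pow hm0, zero_mul, add_zero]
  have hcomp_sZ0 : ∀ H : MvPowerSeries (Wv n) ℂ,
      pssubst sTau0 (pssubst (sLHS Q) H) = pssubst sZ0 H := by
    intro H
    rw [pssubst_comp haLHS haTau0]
    have hfn : (fun w => pssubst sTau0 (sLHS Q w)) = sZ0 (n := n) := by
      funext w
      rcases w with i | u
      · show pssubst sTau0 (MvPowerSeries.X (Sum.inl i)) = MvPowerSeries.X (Sum.inl i)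
        rw [pssubst_X haTau0]; rfl
      · exact hEQ
    rw [hfn]
  have hcomp_sBar : ∀ H : MvPowerSeries (Wv n) ℂ,
      pssubst sTau0 (pssubst sBar H) = pssubst sChi0 H := by
    intro H
    rw [pssubst_comp haBar haTau0]
    have hfn : (fun w => pssubst sTau0 (sBar w)) = sChi0 (n := n) := by
      funext w
      rcases w with i | u
      · show pssubst sTau0 (MvPowerSeries.X (Sum.inr (Sum.inl i)))
          = MvPowerSeries.X (Sum.inr (Sum.inl i))
        rw [pssubst_X haTau0]; rfl
      · show pssubst sTau0 (MvPowerSeries.X (Sum.inr (Sum.inr ()))) = 0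
        rw [pssubst_X haTau0]; rfl
    rw [hfn]
  -- preliminary: G(z,0) = 0 and Ḡ(χ,0) = 0
  have hPE : pssubst sZ0 G = pssubst sChi0 (psconj G)
      + (pssubst sChi0 (psconj G)) ^ m * pssubst sTau0 (pssubst σf Qt) := by
    have h := congrArg (pssubst sTau0) hexp
    rwa [pssubst_add, pssubst_mul haTau0, pssubst_pow haTau0, hcomp_sZ0 G,
      hcomp_sBar (psconj G)] at h
  have hYzero : ∀ H : MvPowerSeries (Wv n) ℂ, constantCoeff (σ := Wv n) (R := ℂ) H = 0 →
      pssubst sY (pssubst sZ0 H) = 0 := by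
    intro H hH
    rw [pssubst_comp haZ0 haY]
    have : (fun w => pssubst sY (sZ0 (n := n) w)) = fun _ => (0 : MvPowerSeries (Vv n) ℂ) := by
      funext w
      rcases w with i | u
      · show pssubst sY (MvPowerSeries.X (Sum.inl i)) = 0
        rw [pssubst_X haY]; rfl
      · exact pssubst_zero _
    rw [this, pssubst_zero_fun, hH, map_zero]
  have hPbsupp : SuppOn pcV (pssubst sChi0 (psconj G)) := by
    apply suppOn_pssubst
    rintro (i | u)
    · exact suppOn_X _ _ trivial
    · exact suppOn_zero _
  have hYPb : pssubst sY (pssubst sChi0 (psconj G)) = pssubst sChi0 (psconj G) := by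
    apply pssubst_eq_self (p := pcV) _ _ hPbsupp
    · rintro (i | (i | u)) hp
      · exact absurd hp id
      · rfl
      · exact absurd hp id
    · rintro (i | (i | u)) hp
      · rfl
      · exact absurd trivial hp
      · rfl
  have haσfT : ∀ v, constantCoeff (σ := Vv n) (R := ℂ) (pssubst sTau0 (σf v)) = 0 := by
    intro v; rw [constantCoeff_pssubst]; exact haσf v
  have hYS0 : pssubst sY (pssubst sTau0 (pssubst σf Qt)) = 0 := by
    rw [pssubst_comp haσf haTau0, pssubst_comp haσfT haY]
    apply pssubst_eq_zero_of_vanish pzV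
    · rintro (i | (i | u)) hp
      · show pssubst sY (pssubst sTau0 (σf (Sum.inl i))) = 0
        rw [hσf]
        show pssubst sY (pssubst sTau0 (pssubst (sLHS Q) (F i))) = 0
        rw [hcomp_sZ0 (F i)]
        exact hYzero (F i) (hF0 i)
      · exact absurd hp id
      · exact absurd hp id
    · intro d hd
      exact hQtχ0 d (fun i => hd (Sum.inl i) trivial)
  have hPb : pssubst sChi0 (psconj G) = 0 := by
    have h := congrArg (pssubst sY) hPE
    rw [pssubst_add, pssubst_mul haY, pssubst_pow haY, hYPb, hYS0, mul_zero, add_zero,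
      hYzero G hG0] at h
    exact h.symm
  have hPzero : pssubst sZ0 G = 0 := by
    rw [hPE, hPb, zero_pow hm0, zero_mul, add_zero]
  -- G is divisible by w
  have hGw : ∀ d : Wv n →₀ ℕ, d (Sum.inr ()) = 0 → MvPowerSeries.coeff (R := ℂ) d G = 0 := by
    intro d hd
    have hX : ∀ w, pzW w → sZ0 (n := n) w = MvPowerSeries.X (iW w) := by
      rintro (i | u) hp
      · rfl
      · exact absurd hp id
    have h0 : ∀ w, ¬ pzW w → sZ0 (n := n) w = 0 := by
      rintro (i | u) hp
      · exact absurd trivial hp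
      · rfl
    have h := pssubst_X_or_zero_coeff pzW iW_inj hX h0 G d
      (by rintro (i | u) hp
          · exact absurd trivial hp
          · rcases u; exact hd)
    rw [hPzero] at h
    exact h.symm
  set Gt : MvPowerSeries (Wv n) ℂ := divXpow (Sum.inr ()) 1 G with hGt
  have hGfac : MvPowerSeries.X (Sum.inr ()) * Gt = G := by
    have h := X_pow_mul_divXpow (v := (Sum.inr () : Wv n)) (k := 1) (f := G)
      (fun d hd => hGw d (by omega))
    rwa [pow_one] at h
  -- factorization of both sides by τ
  set A : MvPowerSeries (Vv n) ℂ := pssubst (sLHS Q) Gt with hA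
  set B : MvPowerSeries (Vv n) ℂ := pssubst sBar (psconj Gt) with hB
  have hLfac : pssubst (sLHS Q) G = Q * A := by
    rw [← hGfac, pssubst_mul haLHS, pssubst_X haLHS]
    rfl
  have hGbfac : pssubst sBar (psconj G) = MvPowerSeries.X (tv n) * B := by
    rw [← hGfac, psconj_mul, psconj_X, pssubst_mul haBar, pssubst_X haBar]
    rfl
  have hXne : (MvPowerSeries.X (tv n) : MvPowerSeries (Vv n) ℂ) ≠ 0 := X_ne_zero' _
  have hXm : (MvPowerSeries.X (tv n) : MvPowerSeries (Vv n) ℂ) ^ m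
      = MvPowerSeries.X (tv n) * (MvPowerSeries.X (tv n)) ^ (m - 1) := by
    conv_lhs => rw [show m = 1 + (m - 1) by omega]
    rw [pow_add, pow_one]
  have hstar : (1 + (MvPowerSeries.X (tv n)) ^ (m - 1) * Qt) * A
      = B + (MvPowerSeries.X (tv n)) ^ (m - 1) * (B ^ m * pssubst σf Qt) := by
    apply mul_left_cancel₀ hXne
    have h1 := hexp
    rw [hLfac, hGbfac, hQdef, mul_pow, hXm] at h1
    linear_combination h1
  have hkey : A - B = (MvPowerSeries.X (tv n)) ^ (m - 1)
      * (B ^ m * pssubst σf Qt - Qt * A) := by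
    linear_combination hstar
  -- apply the τ = 0 substitution to hstar
  have hEX : pssubst sTau0 (MvPowerSeries.X (tv n) : MvPowerSeries (Vv n) ℂ) = 0 := by
    rw [pssubst_X haTau0]; rfl
  have estar : (1 + (0 : MvPowerSeries (Vv n) ℂ) ^ (m - 1) * pssubst sTau0 Qt)
      * pssubst sTau0 A
      = pssubst sTau0 B + (0 : MvPowerSeries (Vv n) ℂ) ^ (m - 1)
        * ((pssubst sTau0 B) ^ m * pssubst sTau0 (pssubst σf Qt)) := by
    have h := congrArg (pssubst sTau0) hstar
    rwa [pssubst_mul haTau0, pssubst_add, pssubst_one, pssubst_mul haTau0,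
      pssubst_pow haTau0, hEX, pssubst_add, pssubst_mul haTau0, pssubst_pow haTau0, hEX,
      pssubst_mul haTau0, pssubst_pow haTau0] at h
  -- identification of E R with the target substitution
  have hER : pssubst sTau0 (pssubst σf Qt) = pssubst σ0 Qt := by
    rw [pssubst_comp haσf haTau0]
    have hfn : (fun v => pssubst sTau0 (σf v)) = σ0 := by
      funext v
      rcases v with i | (i | u)
      · show pssubst sTau0 (pssubst (sLHS Q) (F i)) = pssubst sZ0 (F i)
        exact hcomp_sZ0 (F i)
      · show pssubst sTau0 (pssubst sBar (psconj (F i))) = pssubst sChi0 (psconj (F i))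
        exact hcomp_sBar (psconj (F i))
      · show pssubst sTau0 (pssubst sBar (psconj G)) = 0
        rw [hGbfac, pssubst_mul haTau0, hEX, zero_mul]
    rw [hfn]
  -- structural properties
  have hAbound : TauBound pcV (tv n) m A := by
    apply tauBound_pssubst
    rintro (i | u)
    · show TauBound pcV (tv n) m (MvPowerSeries.X (Sum.inl i))
      apply tauBound_of_suppOn (q := pzV) (suppOn_X pzV (Sum.inl i) trivial)
      rintro (i | (i | u)) hp
      · exact absurd hp id
      · exact id
      · exact id
    · show TauBound pcV (tv n) m Q
      rw [hQdef]
      apply tauBound_add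
      · apply tauBound_of_suppOn (q := fun v => v = tv n)
          (suppOn_X (fun v => v = tv n) (tv n) rfl)
        rintro (i | (i | u)) hp
        · exact absurd hp id
        · intro hc; simp [tv] at hc
        · exact absurd hp id
      · intro d hd _
        exact coeff_X_pow_mul_ne_zero hd
  have hBsupp : SuppOn pctV B := by
    apply suppOn_pssubst
    rintro (i | u)
    · exact suppOn_X pctV (Sum.inr (Sum.inl i)) trivial
    · exact suppOn_X pctV (Sum.inr (Sum.inr ())) trivial
  have hEA_supp : SuppOn pzV (pssubst sTau0 A) := by
    intro d hd v hv
    rw [MvPowerSeries.coeff_apply] at hd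
    by_cases hτ : d (tv n) = 0
    · rw [coeff_sTau0 _ _ hτ] at hd
      rcases v with i | (i | u)
      · trivial
      · exfalso
        have := hAbound d hd ⟨Sum.inr (Sum.inl i), trivial, hv⟩
        omega
      · rcases u; exact absurd hτ hv
    · rw [coeff_sTau0_ne _ _ hτ] at hd
      exact absurd rfl hd
  have hEB_supp : SuppOn pcV (pssubst sTau0 B) := by
    intro d hd v hv
    rw [MvPowerSeries.coeff_apply] at hd
    by_cases hτ : d (tv n) = 0
    · rw [coeff_sTau0 _ _ hτ] at hd
      rcases v with i | (i | u)
      · exact hBsupp d hd _ hv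
      · trivial
      · rcases u; exact absurd hτ hv
    · rw [coeff_sTau0_ne _ _ hτ] at hd
      exact absurd rfl hd
  have hconstGt : constantCoeff (σ := Wv n) (R := ℂ) Gt = g := by
    show Gt 0 = g
    rw [hGt]
    show G (0 + Finsupp.single (Sum.inr ()) 1) = g
    rw [zero_add]
    rfl
  have hcA : constantCoeff (σ := Vv n) (R := ℂ) A = g := by
    rw [hA, constantCoeff_pssubst]; exact hconstGt
  have hcB : constantCoeff (σ := Vv n) (R := ℂ) B = (starRingEnd ℂ) g := by
    rw [hB, constantCoeff_pssubst, constantCoeff_psconj, hconstGt]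
  have hcEA : constantCoeff (σ := Vv n) (R := ℂ) (pssubst sTau0 A) = g := by
    rw [← MvPowerSeries.coeff_zero_eq_constantCoeff_apply, MvPowerSeries.coeff_apply,
      coeff_sTau0 _ _ (by simp), MvPowerSeries.coeff_zero_eq_constantCoeff_apply, hcA]
  have hcEB : constantCoeff (σ := Vv n) (R := ℂ) (pssubst sTau0 B) = (starRingEnd ℂ) g := by
    rw [← MvPowerSeries.coeff_zero_eq_constantCoeff_apply, MvPowerSeries.coeff_apply,
      coeff_sTau0 _ _ (by simp), MvPowerSeries.coeff_zero_eq_constantCoeff_apply, hcB]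
  -- vanishing properties of EQt and ER
  have hEQt_vz : Vanish pzV (pssubst sTau0 Qt) := by
    intro d hd
    rw [MvPowerSeries.coeff_apply]
    by_cases hτ : d (tv n) = 0
    · rw [coeff_sTau0 _ _ hτ]
      exact hQtχ0 d (fun i => hd (Sum.inl i) trivial)
    · exact coeff_sTau0_ne _ _ hτ
  have hEQt_vc : Vanish pcV (pssubst sTau0 Qt) := by
    intro d hd
    rw [MvPowerSeries.coeff_apply]
    by_cases hτ : d (tv n) = 0
    · rw [coeff_sTau0 _ _ hτ]
      exact hQtz0 d (fun i => hd (Sum.inr (Sum.inl i)) trivial)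
    · exact coeff_sTau0_ne _ _ hτ
  have hER_vz : Vanish pzV (pssubst σ0 Qt) := by
    apply vanish_pssubst (q := pzV)
    · rintro (i | (i | u)) hp
      · show Vanish pzV (pssubst sZ0 (F i))
        apply vanish_of_suppOn_constzero (q := pzV) _ _ (fun _ => id)
        · apply suppOn_pssubst
          rintro (j | u)
          · exact suppOn_X pzV (Sum.inl j) trivial
          · exact suppOn_zero _
        · rw [constantCoeff_pssubst]; exact hF0 i
      · exact absurd hp id
      · exact absurd hp id
    · intro d hd
      exact hQtχ0 d (fun i => hd (Sum.inl i) trivial)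
  have hER_vc : Vanish pcV (pssubst σ0 Qt) := by
    apply vanish_pssubst (q := pcV)
    · rintro (i | (i | u)) hp
      · exact absurd hp id
      · show Vanish pcV (pssubst sChi0 (psconj (F i)))
        apply vanish_of_suppOn_constzero (q := pcV) _ _ (fun _ => id)
        · apply suppOn_pssubst
          rintro (j | u)
          · exact suppOn_X pcV (Sum.inr (Sum.inl j)) trivial
          · exact suppOn_zero _
        · rw [constantCoeff_pssubst, constantCoeff_psconj, hF0 i, map_zero]
      · exact absurd hp id
    · intro d hd
      exact hQtz0 d (fun i => hd (Sum.inr (Sum.inl i)) trivial)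
  -- set χ = 0 in estar : EA = C (conj g)
  have hEA : pssubst sTau0 A = MvPowerSeries.C (σ := Vv n) (R := ℂ) ((starRingEnd ℂ) g) := by
    have h := congrArg (pssubst sZch) estar
    rw [pssubst_mul haZch, pssubst_add, pssubst_one, pssubst_mul haZch, pssubst_pow haZch,
      pssubst_zero, pssubst_add, pssubst_mul haZch, pssubst_pow haZch, pssubst_zero,
      pssubst_mul haZch, pssubst_pow haZch] at h
    rw [pssubst_eq_self (p := pzV)
        (by rintro (i | (i | u)) hp
            · rfl
            · exact absurd hp id
            · exact absurd hp id)
        (by rintro (i | (i | u)) hp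
            · exact absurd trivial hp
            · rfl
            · rfl) hEA_supp] at h
    rw [pssubst_eq_zero_of_vanish pcV
        (by rintro (i | (i | u)) hp
            · exact absurd hp id
            · rfl
            · exact absurd hp id) hEQt_vc, hER, pssubst_eq_zero_of_vanish pcV
        (by rintro (i | (i | u)) hp
            · exact absurd hp id
            · rfl
            · exact absurd hp id) hER_vc] at h
    rw [pssubst_eq_C_of_suppOn (p := pcV)
        (by rintro (i | (i | u)) hp
            · exact absurd hp id
            · rfl
            · exact absurd hp id) hEB_supp, hcEB] at h
    rw [mul_zero, add_zero, one_mul, mul_zero, mul_zero, add_zero] at h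
    exact h
  -- set z = 0 in estar : EB = C g
  have hEB : pssubst sTau0 B = MvPowerSeries.C (σ := Vv n) (R := ℂ) g := by
    have h := congrArg (pssubst sY) estar
    rw [pssubst_mul haY, pssubst_add, pssubst_one, pssubst_mul haY, pssubst_pow haY,
      pssubst_zero, pssubst_add, pssubst_mul haY, pssubst_pow haY, pssubst_zero,
      pssubst_mul haY, pssubst_pow haY] at h
    rw [pssubst_eq_C_of_suppOn (p := pzV)
        (by rintro (i | (i | u)) hp
            · rfl
            · exact absurd hp id
            · exact absurd hp id) hEA_supp, hcEA] at h
    rw [pssubst_eq_zero_of_vanish pzV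
        (by rintro (i | (i | u)) hp
            · rfl
            · exact absurd hp id
            · exact absurd hp id) hEQt_vz, hER, pssubst_eq_zero_of_vanish pzV
        (by rintro (i | (i | u)) hp
            · rfl
            · exact absurd hp id
            · exact absurd hp id) hER_vz] at h
    rw [pssubst_eq_self (p := pcV)
        (by rintro (i | (i | u)) hp
            · exact absurd hp id
            · rfl
            · exact absurd hp id)
        (by rintro (i | (i | u)) hp
            · rfl
            · exact absurd trivial hp
            · rfl) hEB_supp] at h
    rw [mul_zero, add_zero, one_mul, mul_zero, mul_zero, add_zero] at h
    exact h.symm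
  -- g is real
  have hreal : (starRingEnd ℂ) g = g := by
    have h := congrArg (constantCoeff (σ := Vv n) (R := ℂ)) hEA
    rw [hcEA, MvPowerSeries.constantCoeff_C] at h
    exact h.symm
  have hEA' : pssubst sTau0 A = MvPowerSeries.C (σ := Vv n) (R := ℂ) g := by rw [hEA, hreal]
  -- the coefficient of τ^(m-1)
  have hEK : pssubst sTau0 (B ^ m * pssubst σf Qt - Qt * A)
      = (MvPowerSeries.C (σ := Vv n) (R := ℂ) g) ^ m * pssubst σ0 Qt
        - pssubst sTau0 Qt * MvPowerSeries.C (σ := Vv n) (R := ℂ) g := by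
    rw [pssubst_sub, pssubst_mul haTau0, pssubst_mul haTau0, pssubst_pow haTau0,
      hEB, hER, hEA']
  have hEK0 : (MvPowerSeries.C (σ := Vv n) (R := ℂ) g) ^ m * pssubst σ0 Qt
      - pssubst sTau0 Qt * MvPowerSeries.C (σ := Vv n) (R := ℂ) g = 0 := by
    ext μ
    rw [map_zero]
    by_cases hz : ∀ i, μ (Sum.inl i) = 0
    · rw [map_sub,
        vanish_mul_right hER_vz _ μ
          (by rintro (i | (i | u)) hp
              exacts [hz i, absurd hp id, absurd hp id]),
        vanish_mul_left hEQt_vz _ μ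
          (by rintro (i | (i | u)) hp
              exacts [hz i, absurd hp id, absurd hp id]), sub_zero]
    by_cases hχ : ∀ i : Fin n, μ (Sum.inr (Sum.inl i)) = 0
    · rw [map_sub,
        vanish_mul_right hER_vc _ μ
          (by rintro (i | (i | u)) hp
              exacts [absurd hp id, hχ i, absurd hp id]),
        vanish_mul_left hEQt_vc _ μ
          (by rintro (i | (i | u)) hp
              exacts [absurd hp id, hχ i, absurd hp id]), sub_zero]
    · -- mixed case
      rw [← hEK, MvPowerSeries.coeff_apply]
      by_cases hτ : μ (tv n) = 0
      · rw [coeff_sTau0 _ _ hτ]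
        have hshift : MvPowerSeries.coeff (R := ℂ) (Finsupp.single (tv n) (m - 1) + μ) (A - B)
            = MvPowerSeries.coeff (R := ℂ) μ (B ^ m * pssubst σf Qt - Qt * A) := by
          rw [hkey, MvPowerSeries.X_pow_eq, MvPowerSeries.coeff_add_monomial_mul, one_mul]
        rw [← hshift, map_sub]
        push_neg at hz hχ
        obtain ⟨iz, hiz⟩ := hz
        obtain ⟨ic, hic⟩ := hχ
        have hAc : MvPowerSeries.coeff (R := ℂ) (Finsupp.single (tv n) (m - 1) + μ) A = 0 := by
          by_contra hc
          have := hAbound _ hc ⟨Sum.inr (Sum.inl ic), trivial, by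
            simp only [Finsupp.coe_add, Pi.add_apply]
            rw [Finsupp.single_eq_of_ne (by simp [tv])]
            simpa using hic⟩
          have ht : (Finsupp.single (tv n) (m - 1) + μ) (tv n) = m - 1 := by
            simp only [Finsupp.coe_add, Pi.add_apply]
            rw [Finsupp.single_eq_same, hτ, add_zero]
          omega
        have hBc : MvPowerSeries.coeff (R := ℂ) (Finsupp.single (tv n) (m - 1) + μ) B = 0 := by
          by_contra hc
          have := hBsupp _ hc (Sum.inl iz) (by
            simp only [Finsupp.coe_add, Pi.add_apply]
            rw [Finsupp.single_eq_of_ne (by simp [tv])]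
            simpa using hiz)
          exact this
        rw [hAc, hBc, sub_zero]
      · exact coeff_sTau0_ne _ _ hτ
  -- conclusion
  have hCg : (MvPowerSeries.C (σ := Vv n) (R := ℂ) g) ≠ 0 := by
    intro hc
    apply hcr
    have := congrArg (constantCoeff (σ := Vv n) (R := ℂ)) hc
    rwa [MvPowerSeries.constantCoeff_C, map_zero] at this
  have hpow : (MvPowerSeries.C (σ := Vv n) (R := ℂ) g) ^ m
      = MvPowerSeries.C (σ := Vv n) (R := ℂ) g * (MvPowerSeries.C (σ := Vv n) (R := ℂ) g) ^ (m - 1) := by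
    conv_lhs => rw [show m = 1 + (m - 1) by omega]
    rw [pow_add, pow_one]
  rw [hpow] at hEK0
  apply mul_left_cancel₀ hCg
  linear_combination -hEK0
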